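/- For positive reals $a, b, c$ not all equal, the cubic polynomial $D(x) = x^3 - 2(a+b+c)x^2 + (a+b+c)^2 x - 4abc$ has three distinct real roots. -/
import Mathlib

lemma quad_vanish {A B C p q r : ℝ} (hpq : p ≠ q) (hpr : p ≠ r) (hqr : q ≠ r)
    (h1 : A * p ^ 2 + B * p + C = 0) (h2 : A * q ^ 2 + B * q + C = 0)
    (h3 : A * r ^ 2 + B * r + C = 0) :
    A = 0 ∧ B = 0 ∧ C = 0 := by
  have hpq' : p - q ≠ 0 := sub_ne_zero.mpr hpq
  have hpr' : p - r ≠ 0 := sub_ne_zero.mpr hpr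
  have hqr' : q - r ≠ 0 := sub_ne_zero.mpr hqr
  have e1 : A * (p + q) + B = 0 := by
    have h : (A * (p + q) + B) * (p - q) = 0 := by nlinarith [h1, h2]
    rcases mul_eq_zero.mp h with h | h
    · exact h
    · exact absurd h hpq'
  have e2 : A * (p + r) + B = 0 := by
    have h : (A * (p + r) + B) * (p - r) = 0 := by nlinarith [h1, h3]
    rcases mul_eq_zero.mp h with h | h
    · exact h
    · exact absurd h hpr'
  have hA : A = 0 := by
    have h : A * (q - r) = 0 := by linarith [e1, e2, mul_add A p q, mul_add A p r]
    rcases mul_eq_zero.mp h with h | h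
    · exact h
    · exact absurd h hqr'
  have hB : B = 0 := by
    rw [hA] at e1; linarith
  have hC : C = 0 := by
    rw [hA, hB] at h1; linarith
  exact ⟨hA, hB, hC⟩

theorem cubic_three_distinct_roots (a b c : ℝ) (ha : 0 < a) (hb : 0 < b) (hc : 0 < c)
    (hne : ¬(a = b ∧ b = c)) :
    ∃ r₁ r₂ r₃ : ℝ, r₁ ≠ r₂ ∧ r₁ ≠ r₃ ∧ r₂ ≠ r₃ ∧
      ∀ x : ℝ, x ^ 3 - 2 * (a + b + c) * x ^ 2 + (a + b + c) ^ 2 * x - 4 * (a * b * c) = 0 ↔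
        (x = r₁ ∨ x = r₂ ∨ x = r₃) := by
  obtain ⟨s, hs⟩ : ∃ s : ℝ, s = a + b + c := ⟨_, rfl⟩
  rw [← hs]
  obtain ⟨f, hf⟩ : ∃ f : ℝ → ℝ, f = fun x => x ^ 3 - 2 * s * x ^ 2 + s ^ 2 * x - 4 * (a * b * c) :=
    ⟨_, rfl⟩
  have hs0 : 0 < s := by rw [hs]; positivity
  have habc : 0 < a * b * c := by positivity
  -- strict AM-GM: s^3 > 27abc
  have hamgm : 27 * (a * b * c) < s ^ 3 := by
    have key : s ^ 3 - 27 * (a * b * c) =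
        1/2 * s * ((a-b)^2 + (b-c)^2 + (a-c)^2)
          + 3 * (a * (b-c)^2 + b * (a-c)^2 + c * (a-b)^2) := by rw [hs]; ring
    rcases not_and_or.mp hne with h | h
    · have h2 : 0 < (a - b) ^ 2 :=
        lt_of_le_of_ne (sq_nonneg _) (Ne.symm (pow_ne_zero 2 (sub_ne_zero.mpr h)))
      nlinarith [mul_pos hs0 h2, mul_nonneg hs0.le (sq_nonneg (b-c)),
        mul_nonneg hs0.le (sq_nonneg (a-c)), mul_nonneg ha.le (sq_nonneg (b-c)),
        mul_nonneg hb.le (sq_nonneg (a-c)), mul_nonneg hc.le (sq_nonneg (a-b))]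
    · have h2 : 0 < (b - c) ^ 2 :=
        lt_of_le_of_ne (sq_nonneg _) (Ne.symm (pow_ne_zero 2 (sub_ne_zero.mpr h)))
      nlinarith [mul_pos hs0 h2, mul_nonneg hs0.le (sq_nonneg (a-b)),
        mul_nonneg hs0.le (sq_nonneg (a-c)), mul_nonneg ha.le (sq_nonneg (b-c)),
        mul_nonneg hb.le (sq_nonneg (a-c)), mul_nonneg hc.le (sq_nonneg (a-b))]
  have hcont : Continuous f := by rw [hf]; fun_prop
  have hf0 : f 0 < 0 := by simp [hf]; nlinarith
  have hfs3 : 0 < f (s / 3) := by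
    have : f (s / 3) = 4 / 27 * (s ^ 3 - 27 * (a * b * c)) := by simp [hf]; ring
    rw [this]; linarith [hamgm]
  have hfs : f s < 0 := by
    have : f s = -(4 * (a * b * c)) := by simp [hf]; ring
    rw [this]; linarith
  set M := s + 4 * (a * b * c) + 1 with hM
  have hfM : 0 < f M := by
    have : f M = M * (M - s) ^ 2 - 4 * (a * b * c) := by simp [hf]; ring
    rw [this, hM]
    nlinarith [mul_pos habc habc, mul_pos hs0 habc, mul_pos hs0 (mul_pos habc habc)]
  -- roots by IVT
  obtain ⟨r₁, hr₁mem, hr₁⟩ := intermediate_value_Icc (by linarith : (0:ℝ) ≤ s / 3)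
    hcont.continuousOn (Set.mem_Icc.mpr ⟨le_of_lt hf0, le_of_lt hfs3⟩)
  obtain ⟨r₂, hr₂mem, hr₂⟩ := intermediate_value_Icc' (by linarith : s / 3 ≤ s)
    hcont.continuousOn (Set.mem_Icc.mpr ⟨le_of_lt hfs, le_of_lt hfs3⟩)
  obtain ⟨r₃, hr₃mem, hr₃⟩ := intermediate_value_Icc (by nlinarith : s ≤ M)
    hcont.continuousOn (Set.mem_Icc.mpr ⟨le_of_lt hfs, le_of_lt hfM⟩)
  obtain ⟨h10, h13⟩ := Set.mem_Icc.mp hr₁mem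
  obtain ⟨h23, h2s⟩ := Set.mem_Icc.mp hr₂mem
  obtain ⟨h3s, h3M⟩ := Set.mem_Icc.mp hr₃mem
  have hr₁lt : r₁ < s / 3 := lt_of_le_of_ne h13 (fun h => by rw [h] at hr₁; linarith)
  have hr₂gt : s / 3 < r₂ := lt_of_le_of_ne h23 (fun h => by rw [← h] at hr₂; linarith)
  have hr₂lt : r₂ < s := lt_of_le_of_ne h2s (fun h => by rw [h] at hr₂; linarith)
  have hr₃gt : s < r₃ := lt_of_le_of_ne h3s (fun h => by rw [← h] at hr₃; linarith)
  have h12 : r₁ ≠ r₂ := ne_of_lt (lt_trans hr₁lt hr₂gt)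
  have h13' : r₁ ≠ r₃ := ne_of_lt (by linarith)
  have h23' : r₂ ≠ r₃ := ne_of_lt (lt_trans hr₂lt hr₃gt)
  refine ⟨r₁, r₂, r₃, h12, h13', h23', fun x => ?_⟩
  -- factorization
  have key : ∀ x : ℝ, f x = (x - r₁) * (x - r₂) * (x - r₃) := by
    have hAq : ∀ y : ℝ, f y - (y - r₁) * (y - r₂) * (y - r₃) =
        ((r₁ + r₂ + r₃) - 2 * s) * y ^ 2 + (s ^ 2 - (r₁*r₂ + r₁*r₃ + r₂*r₃)) * y
          + (r₁*r₂*r₃ - 4 * (a*b*c)) := by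
      intro y; simp [hf]; ring
    have hz1 : ((r₁ + r₂ + r₃) - 2 * s) * r₁ ^ 2 + (s ^ 2 - (r₁*r₂ + r₁*r₃ + r₂*r₃)) * r₁
          + (r₁*r₂*r₃ - 4 * (a*b*c)) = 0 := by rw [← hAq r₁, hr₁]; ring
    have hz2 : ((r₁ + r₂ + r₃) - 2 * s) * r₂ ^ 2 + (s ^ 2 - (r₁*r₂ + r₁*r₃ + r₂*r₃)) * r₂
          + (r₁*r₂*r₃ - 4 * (a*b*c)) = 0 := by rw [← hAq r₂, hr₂]; ring
    have hz3 : ((r₁ + r₂ + r₃) - 2 * s) * r₃ ^ 2 + (s ^ 2 - (r₁*r₂ + r₁*r₃ + r₂*r₃)) * r₃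
          + (r₁*r₂*r₃ - 4 * (a*b*c)) = 0 := by rw [← hAq r₃, hr₃]; ring
    obtain ⟨hA, hB, hC⟩ := quad_vanish h12 h13' h23' hz1 hz2 hz3
    intro y
    have := hAq y
    rw [hA, hB, hC] at this
    linarith [this]
  constructor
  · intro hx
    have hx2 : f x = 0 := by simp only [hf]; exact hx
    have : (x - r₁) * (x - r₂) * (x - r₃) = 0 := by rw [← key x]; exact hx2
    rcases mul_eq_zero.mp this with h | h
    · rcases mul_eq_zero.mp h with h | h
      · exact Or.inl (sub_eq_zero.mp h)
      · exact Or.inr (Or.inl (sub_eq_zero.mp h))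
    · exact Or.inr (Or.inr (sub_eq_zero.mp h))
  · rintro (h | h | h)
    · rw [h]; simpa [hf] using hr₁
    · rw [h]; simpa [hf] using hr₂
    · rw [h]; simpa [hf] using hr₃
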